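/- Let q be a prime power, let M ≥ 1 and k ≥ 1 be integers, and let A(X) ∈ 𝔽_q[X] be a nonzero polynomial with deg(A) < Mq and pseudodegree strictly less than k. Then the number of α ∈ 𝔽_q with mult(A, α) ≥ M is at most k. -/

import Mathlib

open Polynomial

lemma taylor_pow' {F : Type*} [CommRing F] (r : F) (p : F[X]) (n : ℕ) :
    Polynomial.taylor r (p ^ n) = (Polynomial.taylor r p) ^ n := by
  induction n with
  | zero => simp
  | succ n ih => rw [pow_succ, taylor_mul, ih, pow_succ]

lemma taylor_X_sub_C_pow_dvd_iff {F : Type*} [Field F] (A : F[X]) (α : F) (M : ℕ) :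
    (X - C α) ^ M ∣ A ↔ (X : F[X]) ^ M ∣ Polynomial.taylor α A := by
  have htX : Polynomial.taylor α (X - C α) = (X : F[X]) := by
    rw [map_sub, taylor_X, taylor_C]; ring
  constructor
  · rintro ⟨c, hc⟩
    refine ⟨Polynomial.taylor α c, ?_⟩
    rw [hc, taylor_mul, taylor_pow', htX]
  · rintro ⟨c, hc⟩
    refine ⟨Polynomial.taylor (-α) c, ?_⟩
    have h2 := congrArg (Polynomial.taylor (-α)) hc
    rw [taylor_taylor, neg_add_cancel, taylor_zero, taylor_mul, taylor_pow', taylor_X] at h2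
    rw [h2, map_neg]
    ring_nf

lemma X_sub_C_pow_dvd_iff_hasseDeriv {F : Type*} [Field F] (A : F[X]) (α : F) (M : ℕ) :
    (X - C α) ^ M ∣ A ↔ ∀ ℓ < M, (hasseDeriv ℓ A).eval α = 0 := by
  rw [taylor_X_sub_C_pow_dvd_iff, X_pow_dvd_iff]
  exact forall₂_congr fun ℓ _ => by rw [taylor_coeff]

/-- Let `M ≥ 1`, `k ≥ 1`, and let `A ∈ 𝔽_q[X]` be nonzero with
`deg(A) < Mq` and pseudodegree strictly less than `k`. Then the number of `α ∈ 𝔽_q`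
with `mult(A, α) ≥ M` is at most `k`. -/
theorem stmt12 {F : Type*} [Field F] [Fintype F] (q : ℕ) (hq : Fintype.card F = q)
    (M k : ℕ) (hM : 1 ≤ M) (hk : 1 ≤ k)
    (A : F[X]) (hA : A ≠ 0) (hdeg : A.degree < ((M * q : ℕ) : WithBot ℕ))
    (hpdeg : ∀ ℓ : ℕ, ((hasseDeriv ℓ A) %ₘ (X ^ q - X)).degree < (k : WithBot ℕ)) :
    {α : F | (X - C α) ^ M ∣ A}.ncard ≤ k := by
  classical
  set Λ : F[X] := X ^ q - X with hΛ
  have h2q : 2 ≤ q := by rw [← hq]; exact Fintype.one_lt_card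
  have hmonic : Λ.Monic := by
    have hE : Λ = X ^ ((q - 1) + 1) - X := by rw [hΛ, Nat.sub_add_cancel (by omega)]
    rw [hE]
    apply monic_X_pow_sub
    rw [degree_X]
    have h1 : 1 < q - 1 + 1 := by omega
    exact_mod_cast h1
  have hΛroot : ∀ α : F, Λ.eval α = 0 := by
    intro α
    simp [hΛ, ← hq, FiniteField.pow_card]
  have hmodeval : ∀ (B : F[X]) (α : F), (B %ₘ Λ).eval α = B.eval α := by
    intro B α
    conv_rhs => rw [← modByMonic_add_div B Λ]
    simp [hΛroot α]
  by_cases hcase : ∀ ℓ < M, hasseDeriv ℓ A %ₘ Λ = 0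
  · exfalso
    have hall : ∀ α : F, (X - C α) ^ M ∣ A := by
      intro α
      rw [X_sub_C_pow_dvd_iff_hasseDeriv]
      intro ℓ hℓ
      rw [← hmodeval (hasseDeriv ℓ A) α, hcase ℓ hℓ, eval_zero]
    have hmult : ∀ α : F, M ≤ A.rootMultiplicity α := fun α =>
      (le_rootMultiplicity_iff hA).mpr (hall α)
    have hcard : M * q ≤ Multiset.card A.roots := by
      calc M * q = ∑ _α : F, M := by
            rw [Finset.sum_const, Finset.card_univ, hq, smul_eq_mul, mul_comm]
        _ ≤ ∑ α : F, A.roots.count α := Finset.sum_le_sum fun α _ => by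
            rw [count_roots]; exact hmult α
        _ = Multiset.card A.roots := by
            rw [← Multiset.toFinset_sum_count_eq A.roots]
            refine (Finset.sum_subset (Finset.subset_univ _) fun x _ hx => ?_).symm
            exact Multiset.count_eq_zero_of_notMem fun h => hx (Multiset.mem_toFinset.mpr h)
    have hdeg' : A.natDegree < M * q := by
      rwa [degree_eq_natDegree hA, Nat.cast_lt] at hdeg
    have := A.card_roots'
    omega
  · push_neg at hcase
    obtain ⟨ℓ, hℓM, hB⟩ := hcase
    set B : F[X] := hasseDeriv ℓ A %ₘ Λ with hBdef
    have hsub : {α : F | (X - C α) ^ M ∣ A} ⊆ ↑B.roots.toFinset := by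
      intro α hα
      simp only [Set.mem_setOf_eq] at hα
      have h0 : (hasseDeriv ℓ A).eval α = 0 :=
        (X_sub_C_pow_dvd_iff_hasseDeriv A α M).mp hα ℓ hℓM
      simp only [Finset.coe_sort_coe, Multiset.mem_toFinset, Finset.mem_coe]
      rw [mem_roots hB, IsRoot.def, hmodeval (hasseDeriv ℓ A) α]
      exact h0
    have hBdeg : B.natDegree < k := by
      have := hpdeg ℓ
      rwa [degree_eq_natDegree hB, Nat.cast_lt] at this
    calc {α : F | (X - C α) ^ M ∣ A}.ncard
        ≤ (↑B.roots.toFinset : Set F).ncard :=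
          Set.ncard_le_ncard hsub (Finset.finite_toSet _)
      _ = B.roots.toFinset.card := Set.ncard_coe_finset _
      _ ≤ Multiset.card B.roots := Multiset.toFinset_card_le _
      _ ≤ B.natDegree := B.card_roots'
      _ ≤ k := le_of_lt hBdeg
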